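/- Let h₁, h₂ : (0,∞) → (0,∞) be regularly varying at 0 with the same index α > −1, and set h₃ = √(h₁h₂). Let m_i(t) = ∫₀ᵗ h_i, i = 1,2,3. Then lim_{t→0} (m₁(t)m₂(t) − m₃(t)²)/(m₁(t)m₂(t)) = 0. -/

import Mathlib

open MeasureTheory Set Filter


-- Lipschitz image of a null set is null
lemma lip_image_null {f : ℝ → ℝ} {s : Set ℝ} {K : NNReal}
    (hf : LipschitzOnWith K f s) (hs : volume s = 0) : volume (f '' s) = 0 := by
  have h := hf.hausdorffMeasure_image_le (zero_le_one)
  rw [hausdorffMeasure_real] at h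
  simp only [hs, mul_zero, ENNReal.rpow_one] at h
  simpa using h

-- -log is Lipschitz on [a,b] ⊆ (0,∞)
lemma neg_log_lipschitzOnWith {a : ℝ} (ha : 0 < a) :
    LipschitzOnWith (Real.toNNReal a⁻¹) (fun t => -Real.log t) (Ici a) := by
  rw [lipschitzOnWith_iff_dist_le_mul]
  intro x hx y hy
  simp only [mem_Ici] at hx hy
  have hx0 : 0 < x := lt_of_lt_of_le ha hx
  have hy0 : 0 < y := lt_of_lt_of_le ha hy
  rw [Real.dist_eq, Real.dist_eq]
  have key : ∀ u v : ℝ, a ≤ u → a ≤ v → Real.log v - Real.log u ≤ a⁻¹ * |u - v| := by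
    intro u v hu hv
    have hu0 : 0 < u := lt_of_lt_of_le ha hu
    have hv0 : 0 < v := lt_of_lt_of_le ha hv
    have : Real.log v - Real.log u = Real.log (v / u) := by
      rw [Real.log_div hv0.ne' hu0.ne']
    rw [this]
    have h1 : Real.log (v / u) ≤ v / u - 1 := Real.log_le_sub_one_of_pos (by positivity)
    have h2 : v / u - 1 = (v - u) / u := by field_simp
    calc Real.log (v/u) ≤ (v - u)/u := by rw [← h2]; exact h1
      _ ≤ |v - u| / u := by gcongr; exact le_abs_self _
      _ ≤ |v - u| / a := by gcongr
      _ = a⁻¹ * |u - v| := by rw [abs_sub_comm]; ring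
  have habs : |(-Real.log x) - (-Real.log y)| = |Real.log y - Real.log x| := by
    congr 1; ring
  rw [habs]
  have hc : (Real.toNNReal a⁻¹ : ℝ) = a⁻¹ := Real.coe_toNNReal _ (by positivity)
  rw [abs_sub_le_iff]
  constructor
  · calc Real.log y - Real.log x ≤ a⁻¹ * |x - y| := key x y hx hy
      _ = (Real.toNNReal a⁻¹ : ℝ) * |x - y| := by rw [hc]
  · calc Real.log x - Real.log y ≤ a⁻¹ * |y - x| := key y x hy hx
      _ = (Real.toNNReal a⁻¹ : ℝ) * |x - y| := by rw [hc, abs_sub_comm]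

-- preimage of a null set under x ↦ exp(-x) is null
lemma exp_neg_preimage_null {D : Set ℝ} (h0 : volume D = 0) :
    volume {x : ℝ | Real.exp (-x) ∈ D} = 0 := by
  have cover : {x : ℝ | Real.exp (-x) ∈ D} =
      ⋃ k : ℤ, ({x : ℝ | Real.exp (-x) ∈ D} ∩ Icc (k : ℝ) (k+1)) := by
    ext x
    simp only [mem_iUnion, mem_inter_iff, mem_setOf_eq, mem_Icc]
    constructor
    · intro hx
      exact ⟨⌊x⌋, hx, Int.floor_le x, by
        have := Int.lt_floor_add_one x
        linarith⟩
    · rintro ⟨k, hk, _⟩; exact hk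
  rw [cover]
  apply measure_iUnion_null
  intro k
  set a : ℝ := Real.exp (-((k:ℝ)+1)) with ha
  have ha0 : 0 < a := Real.exp_pos _
  have hsub : {x : ℝ | Real.exp (-x) ∈ D} ∩ Icc (k : ℝ) (k+1) ⊆
      (fun t => -Real.log t) '' (D ∩ Ici a) := by
    rintro x ⟨hx, hk1, hk2⟩
    refine ⟨Real.exp (-x), ⟨hx, ?_⟩, ?_⟩
    · rw [ha, mem_Ici]
      exact Real.exp_le_exp.2 (by linarith)
    · simp [Real.log_exp]
  refine measure_mono_null hsub (lip_image_null ((neg_log_lipschitzOnWith ha0).mono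
      (inter_subset_right)) (measure_mono_null (inter_subset_left) h0))

-- Uniform convergence theorem for additive slowly varying functions
lemma uct_additive (w : ℝ → ℝ) (hw : AEMeasurable w volume)
    (hconv : ∀ y : ℝ, Tendsto (fun x => w (x + y) - w x) atTop (nhds 0))
    {ε L : ℝ} (hε : 0 < ε) (hL : 0 < L) :
    ∀ᶠ x in atTop, ∀ y ∈ Icc (0:ℝ) L, |w (x + y) - w x| ≤ ε := by
  by_contra hcon
  rw [Filter.not_eventually] at hcon
  have hseq : ∀ n : ℕ, ∃ x : ℝ, (n:ℝ) ≤ x ∧ ∃ y, y ∈ Icc (0:ℝ) L ∧ ε < |w (x + y) - w x| := by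
    intro n
    rcases (frequently_atTop.1 hcon) (n:ℝ) with ⟨x, hx, hx2⟩
    push_neg at hx2
    obtain ⟨y, hy, hy2⟩ := hx2
    exact ⟨x, hx, y, hy, hy2⟩
  choose X hX Y hY hgt using hseq
  have hXtop : Tendsto X atTop atTop :=
    tendsto_atTop_mono hX tendsto_natCast_atTop_atTop
  set Z : ℕ → ℝ := fun n => X n + Y n with hZdef
  have hZtop : Tendsto Z atTop atTop :=
    tendsto_atTop_mono (fun n => le_add_of_nonneg_right (hY n).1) hXtop
  set ε3 := ε/3 with hε3def
  have hε3 : 0 < ε3 := by positivity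
  set g := hw.mk w with hg
  have hgm : Measurable g := hw.measurable_mk
  have hwg : w =ᵐ[volume] g := hw.ae_eq_mk
  set F : (ℕ → ℝ) → ℕ → Set ℝ := fun V n => Icc 0 (2*L) ∩
    ⋂ (m : ℕ), ⋂ (_ : n ≤ m),
      (fun y => g (V m + y)) ⁻¹' (Icc (w (V m) - ε3) (w (V m) + ε3)) with hFdef
  have hFm : ∀ V n, MeasurableSet (F V n) := fun V n =>
    measurableSet_Icc.inter (MeasurableSet.iInter fun m => MeasurableSet.iInter fun _ =>
      (hgm.comp (measurable_const_add _)) measurableSet_Icc)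
  have hFmono : ∀ V, Monotone (F V) := by
    intro V a b hab y hy
    obtain ⟨hy1, hy2⟩ := hy
    refine ⟨hy1, ?_⟩
    simp only [mem_iInter, mem_preimage] at hy2 ⊢
    intro m hm
    exact hy2 m (le_trans hab hm)
  have hFmem : ∀ V n y, y ∈ F V n → ∀ m, n ≤ m →
      |g (V m + y) - w (V m)| ≤ ε3 := by
    intro V n y hy m hm
    have h2 := hy.2
    simp only [mem_iInter, mem_preimage, mem_Icc] at h2
    have := h2 m hm
    rw [abs_sub_le_iff]
    constructor <;> linarith [this.1, this.2]
  have hFcover : ∀ V : ℕ → ℝ, Tendsto V atTop atTop →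
      ∃ n, ENNReal.ofReal (3*L/2) < volume (F V n) := by
    intro V hV
    have hN : volume {x | w x ≠ g x} = 0 := ae_iff.1 hwg
    set N1 := ⋃ m : ℕ, (fun y => V m + y) ⁻¹' {x | w x ≠ g x} with hN1def
    have hN1 : volume N1 = 0 := measure_iUnion_null fun m => by
      rw [measure_preimage_add]; exact hN
    have hsub : Icc 0 (2*L) ⊆ (⋃ n, F V n) ∪ N1 := by
      intro y hy
      by_cases hyN : y ∈ N1
      · exact Or.inr hyN
      · left
        have heq : ∀ m : ℕ, g (V m + y) = w (V m + y) := by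
          intro m
          by_contra hne
          exact hyN (mem_iUnion.2 ⟨m, fun hh => hne (id hh.symm)⟩)
        have htd : Tendsto (fun m => w (V m + y) - w (V m)) atTop (nhds 0) :=
          (hconv y).comp hV
        have hev : ∀ᶠ m in atTop, |w (V m + y) - w (V m)| ≤ ε3 := by
          have hb := Metric.tendsto_nhds.mp htd ε3 hε3
          filter_upwards [hb] with m hm
          rw [Real.dist_eq, sub_zero] at hm
          exact hm.le
        obtain ⟨n, hn⟩ := eventually_atTop.1 hev
        refine mem_iUnion.2 ⟨n, hy, ?_⟩
        simp only [mem_iInter, mem_preimage, mem_Icc]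
        intro m hm
        have := hn m hm
        rw [heq m]
        rw [abs_sub_le_iff] at this
        constructor <;> linarith [this.1, this.2]
    have hvol : ENNReal.ofReal (2*L) ≤ volume (⋃ n, F V n) := by
      have h1 : volume (Icc (0:ℝ) (2*L)) = ENNReal.ofReal (2*L) := by
        rw [Real.volume_Icc, sub_zero]
      calc ENNReal.ofReal (2*L) = volume (Icc (0:ℝ) (2*L)) := h1.symm
        _ ≤ volume ((⋃ n, F V n) ∪ N1) := measure_mono hsub
        _ ≤ volume (⋃ n, F V n) + volume N1 := measure_union_le _ _
        _ = volume (⋃ n, F V n) := by rw [hN1, add_zero]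
    have htm := tendsto_measure_iUnion_atTop (μ := volume) (hFmono V)
    have hlt : ENNReal.ofReal (3*L/2) < volume (⋃ n, F V n) :=
      lt_of_lt_of_le (ENNReal.ofReal_lt_ofReal_iff (by linarith) |>.2 (by linarith)) hvol
    obtain ⟨n, hn⟩ := (htm.eventually (eventually_gt_nhds hlt)).exists
    exact ⟨n, hn⟩
  obtain ⟨n₁, hn₁⟩ := hFcover X hXtop
  obtain ⟨n₂, hn₂⟩ := hFcover Z hZtop
  set n := max n₁ n₂ with hndef
  have hA : ENNReal.ofReal (3*L/2) < volume (F X n) :=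
    lt_of_lt_of_le hn₁ (measure_mono (hFmono X (le_max_left _ _)))
  set B := (fun y => y + -(Y n)) ⁻¹' (F Z n) with hBdef
  have hBvol : volume B = volume (F Z n) := measure_preimage_add_right _ _ _
  have hB : ENNReal.ofReal (3*L/2) < volume B := by
    rw [hBvol]
    exact lt_of_lt_of_le hn₂ (measure_mono (hFmono Z (le_max_right _ _)))
  have hABsub : F X n ∪ B ⊆ Icc 0 (3*L) := by
    intro y hy
    rcases hy with hy | hy
    · have := hy.1
      rw [mem_Icc] at this ⊢
      constructor <;> linarith [this.1, this.2]
    · have h1 : y + -(Y n) ∈ Icc (0:ℝ) (2*L) := (mem_preimage.1 hy).1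
      rw [mem_Icc] at h1 ⊢
      have h2 := hY n
      rw [mem_Icc] at h2
      constructor <;> linarith [h1.1, h1.2, h2.1, h2.2]
  have hAB : (F X n ∩ B).Nonempty := by
    by_contra hem
    rw [not_nonempty_iff_eq_empty] at hem
    have hdisj : Disjoint (F X n) B := disjoint_iff_inter_eq_empty.2 hem
    have hBm : MeasurableSet B := (measurable_add_const _) (hFm Z n)
    have hU : volume (F X n ∪ B) = volume (F X n) + volume B :=
      measure_union hdisj hBm
    have hle : volume (F X n ∪ B) ≤ ENNReal.ofReal (3*L) := by
      calc volume (F X n ∪ B) ≤ volume (Icc (0:ℝ) (3*L)) := measure_mono hABsub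
        _ = ENNReal.ofReal (3*L) := by rw [Real.volume_Icc, sub_zero]
    have hgt' : ENNReal.ofReal (3*L) < volume (F X n) + volume B := by
      calc ENNReal.ofReal (3*L) = ENNReal.ofReal (3*L/2) + ENNReal.ofReal (3*L/2) := by
            rw [← ENNReal.ofReal_add (by linarith) (by linarith)]; ring_nf
        _ < volume (F X n) + volume B := ENNReal.add_lt_add hA hB
    exact absurd (hU ▸ hle) (not_le.2 hgt')
  obtain ⟨y, hyA, hyB⟩ := hAB
  have k1 : |g (X n + y) - w (X n)| ≤ ε3 := hFmem X n y hyA n (le_refl n)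
  have k2 : |g (Z n + (y + -(Y n))) - w (Z n)| ≤ ε3 :=
    hFmem Z n _ (mem_preimage.1 hyB) n (le_refl n)
  have harg : Z n + (y + -(Y n)) = X n + y := by rw [hZdef]; ring
  rw [harg] at k2
  have k3 : |w (Z n) - w (X n)| ≤ 2 * ε3 := by
    calc |w (Z n) - w (X n)|
        = |(g (X n + y) - w (X n)) - (g (X n + y) - w (Z n))| := by ring_nf
      _ ≤ |g (X n + y) - w (X n)| + |g (X n + y) - w (Z n)| := abs_sub _ _
      _ ≤ ε3 + ε3 := add_le_add k1 (abs_sub_comm (g (X n + y)) (w (Z n)) ▸ k2)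
      _ = 2 * ε3 := by ring
  have hz : Z n = X n + Y n := rfl
  have hgtn := hgt n
  rw [← hz] at hgtn
  have : ε < 2 * ε3 := lt_of_lt_of_le hgtn k3
  rw [hε3def] at this
  linarith

lemma w_aemeasurable (h : ℝ → ℝ) (meas : AEMeasurable h (volume.restrict (Ioi 0))) (α : ℝ) :
    AEMeasurable (fun x => Real.log (h (Real.exp (-x))) + α * x) volume := by
  set g := meas.mk h with hgdef
  have hgm : Measurable g := meas.measurable_mk
  have heq : h =ᵐ[volume.restrict (Ioi 0)] g := meas.ae_eq_mk
  have hD : volume ({t | h t ≠ g t} ∩ Ioi 0) = 0 := by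
    have := ae_iff.1 heq
    rwa [Measure.restrict_apply' measurableSet_Ioi] at this
  have hnull : volume {x : ℝ | Real.exp (-x) ∈ ({t | h t ≠ g t} ∩ Ioi 0)} = 0 :=
    exp_neg_preimage_null hD
  have hwm : Measurable (fun x => Real.log (g (Real.exp (-x))) + α * x) := by
    exact ((Real.measurable_log.comp (hgm.comp (Real.measurable_exp.comp measurable_neg))).add
      (measurable_id.const_mul α))
  refine hwm.aemeasurable.congr ?_
  refine measure_mono_null ?_ hnull
  intro x hx
  simp only [mem_compl_iff, mem_setOf_eq] at hx
  simp only [mem_setOf_eq, mem_inter_iff, mem_Ioi]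
  refine ⟨?_, Real.exp_pos _⟩
  intro hcontra
  exact hx (by rw [hcontra])

lemma potter (h : ℝ → ℝ) (α : ℝ) (hα : -1 < α)
    (hpos : ∀ t > (0:ℝ), 0 < h t)
    (meas : AEMeasurable h (volume.restrict (Ioi 0)))
    (hrv : ∀ t > (0:ℝ), Tendsto (fun s => h (s * t) / h s)
      (nhdsWithin 0 (Ioi 0)) (nhds (t ^ α))) :
    ∃ δ > (0:ℝ), ∃ C : ℝ, 0 < C ∧
      ∀ s ∈ Ioo (0:ℝ) δ, ∀ u ∈ Ioc (0:ℝ) 1,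
        h (u * s) ≤ C * u ^ ((min α 0 - 1)/2) * h s := by
  set α' : ℝ := (min α 0 - 1)/2 with hα'def
  have hα'neg : α' < 0 := by
    have := min_le_right α 0
    rw [hα'def]; linarith
  have hα'α : α' < α := by
    have h1 := min_le_left α 0
    rw [hα'def]; linarith
  set K : ℝ := (2:ℝ) ^ (-α') with hKdef
  have hK1 : 1 < K := Real.one_lt_rpow_iff_of_pos (by norm_num) |>.2 (Or.inl ⟨by norm_num, by linarith⟩)
  have hK0 : 0 < K := lt_trans one_pos hK1
  set M : ℝ := max 1 ((2:ℝ) ^ (-α)) with hMdef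
  have hM1 : 1 ≤ M := le_max_left _ _
  have hM0 : 0 < M := lt_of_lt_of_le one_pos hM1
  have hKM : M < K := by
    rw [hMdef]
    rcases max_cases (1:ℝ) ((2:ℝ)^(-α)) with ⟨hm, _⟩ | ⟨hm, _⟩
    · rw [hm]; exact hK1
    · rw [hm, hKdef]
      exact Real.rpow_lt_rpow_left_iff (by norm_num) |>.2 (by linarith)
  set ε : ℝ := Real.log K - Real.log M with hεdef
  have hε : 0 < ε := by
    rw [hεdef]
    have := Real.log_lt_log hM0 hKM
    linarith
  set w : ℝ → ℝ := fun x => Real.log (h (Real.exp (-x))) + α * x with hwdef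
  have hwae : AEMeasurable w volume := w_aemeasurable h meas α
  have hexp_tendsto : Tendsto (fun x : ℝ => Real.exp (-x)) atTop (nhdsWithin 0 (Ioi 0)) := by
    rw [tendsto_nhdsWithin_iff]
    constructor
    · exact Real.tendsto_exp_atBot.comp tendsto_neg_atTop_atBot
    · exact Eventually.of_forall fun x => Real.exp_pos _
  have hconv : ∀ y : ℝ, Tendsto (fun x => w (x + y) - w x) atTop (nhds 0) := by
    intro y
    set u : ℝ := Real.exp (-y) with hudef
    have hu0 : 0 < u := Real.exp_pos _
    have t1 : Tendsto (fun s => h (s * u) / h s) (nhdsWithin 0 (Ioi 0)) (nhds (u ^ α)) :=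
      hrv u hu0
    have t2 : Tendsto (fun x : ℝ => h (Real.exp (-x) * u) / h (Real.exp (-x))) atTop
        (nhds (u ^ α)) := t1.comp hexp_tendsto
    have t3 : Tendsto (fun x : ℝ => Real.log (h (Real.exp (-x) * u) / h (Real.exp (-x)))) atTop
        (nhds (Real.log (u ^ α))) :=
      (Real.continuousAt_log (ne_of_gt (Real.rpow_pos_of_pos hu0 α))).tendsto.comp t2
    have hlogu : Real.log (u ^ α) = α * (-y) := by
      rw [Real.log_rpow hu0, hudef, Real.log_exp]
    rw [hlogu] at t3
    have t4 := t3.add_const (α * y)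
    have heq : ∀ x : ℝ, Real.log (h (Real.exp (-x) * u) / h (Real.exp (-x))) + α * y
        = w (x + y) - w x := by
      intro x
      have e1 : Real.exp (-(x+y)) = Real.exp (-x) * u := by
        rw [hudef, ← Real.exp_add]; ring_nf
      have p1 : 0 < h (Real.exp (-x) * u) := by
        rw [← e1]; exact hpos _ (Real.exp_pos _)
      have p2 : 0 < h (Real.exp (-x)) := hpos _ (Real.exp_pos _)
      rw [Real.log_div p1.ne' p2.ne', hwdef]
      simp only [← e1]
      ring
    have t5 : Tendsto (fun x => w (x + y) - w x) atTop (nhds (α * (-y) + α * y)) := by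
      refine Tendsto.congr (fun x => heq x) t4
    simpa using t5
  obtain ⟨x₀, hx₀⟩ := eventually_atTop.1
    (uct_additive w hwae hconv hε (Real.log_pos (by norm_num : (1:ℝ) < 2)))
  set δ : ℝ := min (Real.exp (-x₀)) 1 with hδdef
  have hδ0 : 0 < δ := lt_min (Real.exp_pos _) one_pos
  -- Step 1: bound for u ∈ [1/2, 1]
  have step1 : ∀ s ∈ Ioo (0:ℝ) δ, ∀ u ∈ Icc (1/2 : ℝ) 1, h (u * s) ≤ K * h s := by
    rintro s ⟨hs0, hsδ⟩ u ⟨hu1, hu2⟩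
    have hu0 : 0 < u := by linarith
    set x : ℝ := -Real.log s with hxdef
    set y : ℝ := -Real.log u with hydef
    have hxx : Real.exp (-x) = s := by rw [hxdef, neg_neg, Real.exp_log hs0]
    have hx : x₀ ≤ x := by
      have h1 : s < Real.exp (-x₀) := lt_of_lt_of_le hsδ (min_le_left _ _)
      have h2 : Real.log s < -x₀ := by
        calc Real.log s < Real.log (Real.exp (-x₀)) := Real.log_lt_log hs0 h1
          _ = -x₀ := Real.log_exp _
      rw [hxdef]; linarith
    have hy : y ∈ Icc (0:ℝ) (Real.log 2) := by
      constructor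
      · rw [hydef]
        have : Real.log u ≤ 0 := Real.log_nonpos (le_of_lt hu0) hu2
        linarith
      · rw [hydef]
        have : Real.log (1/2 : ℝ) ≤ Real.log u := Real.log_le_log (by norm_num) hu1
        rw [Real.log_div one_ne_zero (by norm_num), Real.log_one] at this
        linarith
    have huct := hx₀ x hx y hy
    have e1 : Real.exp (-(x+y)) = u * s := by
      rw [neg_add, Real.exp_add, hxx]
      rw [hydef, neg_neg, Real.exp_log hu0]
      ring
    have p1 : 0 < h (u * s) := hpos _ (by positivity)
    have p2 : 0 < h s := hpos _ hs0
    have hw_eq : w (x + y) - w x = Real.log (h (u * s)) - Real.log (h s) + α * y := by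
      rw [hwdef]
      simp only [e1, hxx]
      ring
    have key : Real.log (h (u * s)) - Real.log (h s) ≤ Real.log K := by
      have h1 : w (x + y) - w x ≤ ε := le_trans (le_abs_self _) huct
      have h2 : -(α * y) ≤ Real.log M := by
        rcases le_or_gt 0 α with hc | hc
        · have : 0 ≤ α * y := mul_nonneg hc hy.1
          calc -(α * y) ≤ 0 := by linarith
            _ ≤ Real.log M := Real.log_nonneg hM1
        · have h3 : -(α * y) ≤ -α * Real.log 2 := by
            have : α * y ≥ α * Real.log 2 := by
              apply mul_le_mul_of_nonpos_left hy.2 (le_of_lt hc)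
            linarith
          have h4 : -α * Real.log 2 = Real.log ((2:ℝ) ^ (-α)) := by
            rw [Real.log_rpow (by norm_num)]
          have h5 : Real.log ((2:ℝ)^(-α)) ≤ Real.log M :=
            Real.log_le_log (Real.rpow_pos_of_pos (by norm_num) _) (le_max_right _ _)
          linarith
      rw [hw_eq] at h1
      rw [hεdef] at h1
      linarith
    have : Real.log (h (u * s)) ≤ Real.log (K * h s) := by
      rw [Real.log_mul hK0.ne' p2.ne']
      linarith
    exact (Real.log_le_log_iff p1 (by positivity)).1 this
  -- Step 2: chaining
  have step2 : ∀ k : ℕ, ∀ s ∈ Ioo (0:ℝ) δ, ∀ u : ℝ,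
      (1/2:ℝ)^(k+1) ≤ u → u ≤ (1/2:ℝ)^k → h (u * s) ≤ K^(k+1) * h s := by
    intro k
    induction k with
    | zero =>
      intro s hs u h1 h2
      have := step1 s hs u ⟨by simpa using h1, by simpa using h2⟩
      simpa using this
    | succ k ih =>
      intro s hs u h1 h2
      set u' : ℝ := 2 * u with hu'def
      have hu'1 : (1/2:ℝ)^(k+1) ≤ u' := by
        rw [hu'def]
        have : (1/2:ℝ)^(k+1+1) = (1/2) * (1/2)^(k+1) := by ring
        rw [this] at h1
        linarith
      have hu'2 : u' ≤ (1/2:ℝ)^k := by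
        rw [hu'def]
        have : (1/2:ℝ)^(k+1) = (1/2) * (1/2)^k := by ring
        rw [this] at h2
        linarith
      have hu'0 : 0 < u' := lt_of_lt_of_le (by positivity) hu'1
      have hs0 := hs.1
      have hu's : u' * s ∈ Ioo (0:ℝ) δ := by
        constructor
        · positivity
        · have hle1 : u' ≤ 1 := le_trans hu'2 (by
            apply pow_le_one₀ <;> norm_num)
          calc u' * s ≤ 1 * s := by
                apply mul_le_mul_of_nonneg_right hle1 (le_of_lt hs0)
            _ = s := one_mul s
            _ < δ := hs.2
      have e1 : u * s = (1/2) * (u' * s) := by rw [hu'def]; ring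
      calc h (u * s) = h ((1/2) * (u' * s)) := by rw [e1]
        _ ≤ K * h (u' * s) := step1 (u' * s) hu's (1/2) ⟨le_refl _, by norm_num⟩
        _ ≤ K * (K^(k+1) * h s) := by
            apply mul_le_mul_of_nonneg_left (ih s hs u' hu'1 hu'2) (le_of_lt hK0)
        _ = K^(k+1+1) * h s := by ring
  refine ⟨δ, hδ0, K, hK0, ?_⟩
  rintro s hs u ⟨hu0, hu1⟩
  -- find k with (1/2)^(k+1) ≤ u ≤ (1/2)^k
  have hex : ∃ m : ℕ, (1/2:ℝ)^m < u := exists_pow_lt_of_lt_one hu0 (by norm_num)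
  set m := Nat.find hex with hmdef
  have hm : (1/2:ℝ)^m < u := Nat.find_spec hex
  have hm0 : m ≠ 0 := by
    intro hc
    rw [hc] at hm
    simp at hm
    linarith
  set k := m - 1 with hkdef
  have hk1 : k + 1 = m := Nat.succ_pred_eq_of_pos (Nat.pos_of_ne_zero hm0)
  have hub : u ≤ (1/2:ℝ)^k := by
    by_contra hc
    push_neg at hc
    have : k < m := by omega
    exact absurd hc (by simpa using Nat.find_min hex this)
  have hlb : (1/2:ℝ)^(k+1) ≤ u := by rw [hk1]; exact le_of_lt hm
  have hmain := step2 k s hs u hlb hub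
  have hKk : K^k ≤ u ^ α' := by
    have e1 : (K:ℝ)^k = ((1/2:ℝ)^k) ^ α' := by
      rw [hKdef]
      rw [← Real.rpow_natCast ((2:ℝ)^(-α')) k, ← Real.rpow_natCast ((1/2:ℝ)) k]
      rw [← Real.rpow_mul (by norm_num : (0:ℝ) ≤ 2)]
      have : ((1/2:ℝ) ^ (k:ℝ)) = (2:ℝ) ^ (-(k:ℝ)) := by
        rw [show (1/2:ℝ) = 2⁻¹ by norm_num, Real.inv_rpow (by norm_num : (0:ℝ) ≤ 2),
          ← Real.rpow_neg (by norm_num : (0:ℝ) ≤ 2)]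
      rw [this, ← Real.rpow_mul (by norm_num : (0:ℝ) ≤ 2)]
      ring_nf
    rw [e1]
    exact Real.rpow_le_rpow_of_nonpos hu0 hub (le_of_lt hα'neg)
  have hfin : K^(k+1) ≤ K * u ^ α' := by
    have : K^(k+1) = K * K^k := by ring
    rw [this]
    exact mul_le_mul_of_nonneg_left hKk (le_of_lt hK0)
  calc h (u * s) ≤ K^(k+1) * h s := hmain
    _ ≤ (K * u ^ α') * h s := by
        apply mul_le_mul_of_nonneg_right hfin (le_of_lt (hpos s hs.1))
    _ = K * u ^ ((min α 0 - 1)/2) * h s := by rw [hα'def]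

set_option maxHeartbeats 1000000 in
lemma karamata (h : ℝ → ℝ) (α : ℝ) (hα : -1 < α)
    (hpos : ∀ t > (0:ℝ), 0 < h t)
    (hint : ∀ t > (0:ℝ), IntegrableOn h (Ioo 0 t))
    (hrv : ∀ t > (0:ℝ), Tendsto (fun s => h (s * t) / h s)
      (nhdsWithin 0 (Ioi 0)) (nhds (t ^ α))) :
    Tendsto (fun t => (∫ x in Ioo 0 t, h x) / (t * h t)) (nhdsWithin 0 (Ioi 0))
      (nhds (1/(α+1))) := by
  have meas : AEMeasurable h (volume.restrict (Ioi 0)) := by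
    have hU : Ioi (0:ℝ) = ⋃ n : ℕ, Ioo (0:ℝ) ((n:ℝ)+1) := by
      ext x
      simp only [mem_Ioi, mem_iUnion, mem_Ioo]
      constructor
      · intro hx
        obtain ⟨n, hn⟩ := exists_nat_gt x
        exact ⟨n, hx, by linarith⟩
      · rintro ⟨n, hn, _⟩; exact hn
    rw [hU]
    exact aemeasurable_iUnion_iff.2 fun n =>
      ((hint (n+1) (by positivity)).aestronglyMeasurable.aemeasurable)
  obtain ⟨δ, hδ0, C, hC0, hpot⟩ := potter h α hα hpos meas hrv
  set α' : ℝ := (min α 0 - 1)/2 with hα'def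
  have hα'gt : -1 < α' := by
    rcases min_cases α (0:ℝ) with ⟨hm, _⟩ | ⟨hm, _⟩ <;> rw [hα'def, hm] <;> linarith
  have hα'neg : α' < 0 := by
    have := min_le_right α 0
    rw [hα'def]; linarith
  -- integrability of the rescaled function
  have hcomp : ∀ t > (0:ℝ), IntegrableOn (fun u => h (u * t)) (Ioo 0 1) := by
    intro t ht
    have hii : IntervalIntegrable h volume 0 t := by
      rw [intervalIntegrable_iff_integrableOn_Ioo_of_le (le_of_lt ht)]
      exact hint t ht
    have := hii.comp_mul_right (c := t)
    rw [zero_div, div_self (ne_of_gt ht)] at this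
    rw [← intervalIntegrable_iff_integrableOn_Ioo_of_le (by norm_num : (0:ℝ) ≤ 1)]
    exact this
  -- substitution identity
  have hsubst : ∀ t > (0:ℝ), (∫ x in Ioo 0 t, h x) = t * ∫ u in Ioo 0 1, h (u * t) := by
    intro t ht
    have e1 : (∫ u in (0:ℝ)..1, h (u * t)) = t⁻¹ • ∫ x in (0*t:ℝ)..(1*t), h x :=
      intervalIntegral.integral_comp_mul_right h (ne_of_gt ht)
    rw [zero_mul, one_mul] at e1
    rw [intervalIntegral.integral_of_le (by norm_num : (0:ℝ) ≤ 1),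
      intervalIntegral.integral_of_le (le_of_lt ht), integral_Ioc_eq_integral_Ioo,
      integral_Ioc_eq_integral_Ioo] at e1
    rw [e1, smul_eq_mul]
    field_simp
  -- dominated convergence
  have main : Tendsto (fun t => ∫ u in Ioo (0:ℝ) 1, h (u * t) / h t)
      (nhdsWithin 0 (Ioi 0)) (nhds (∫ u in Ioo (0:ℝ) 1, u ^ α)) := by
    refine MeasureTheory.tendsto_integral_filter_of_dominated_convergence
      (μ := volume.restrict (Ioo (0:ℝ) 1)) (F := fun t u => h (u * t) / h t)
      (f := fun u : ℝ => u ^ α) (bound := fun u : ℝ => C * u ^ α') ?_ ?_ ?_ ?_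
    · filter_upwards [self_mem_nhdsWithin] with t ht
      simp only [div_eq_mul_inv]
      exact (hcomp t ht).aestronglyMeasurable.mul_const (h t)⁻¹
    · filter_upwards [Ioo_mem_nhdsGT_of_mem ⟨le_refl (0:ℝ), hδ0⟩] with t ht
      rw [ae_restrict_iff' measurableSet_Ioo]
      refine ae_of_all _ fun u hu => ?_
      have ht0 : 0 < t := ht.1
      have hut : 0 < u * t := mul_pos hu.1 ht0
      have hht : 0 < h t := hpos t ht0
      have hhut : 0 < h (u * t) := hpos _ hut
      have hb := hpot t ht u ⟨hu.1, le_of_lt hu.2⟩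
      rw [Real.norm_eq_abs, abs_of_pos (div_pos hhut hht), div_le_iff₀ hht]
      calc h (u * t) ≤ C * u ^ ((min α 0 - 1)/2) * h t := hb
        _ = C * u ^ α' * h t := by rw [← hα'def]
    · have hii : IntervalIntegrable (fun u : ℝ => u ^ α') volume 0 1 :=
        intervalIntegral.intervalIntegrable_rpow' hα'gt
      rw [intervalIntegrable_iff_integrableOn_Ioo_of_le (by norm_num : (0:ℝ) ≤ 1)] at hii
      exact hii.const_mul C
    · rw [ae_restrict_iff' measurableSet_Ioo]
      refine ae_of_all _ fun u hu => ?_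
      have := hrv u hu.1
      refine this.congr fun s => ?_
      rw [mul_comm]
  have hval : (∫ u in Ioo (0:ℝ) 1, u ^ α) = 1/(α+1) := by
    rw [← integral_Ioc_eq_integral_Ioo,
      ← intervalIntegral.integral_of_le (by norm_num : (0:ℝ) ≤ 1)]
    rw [integral_rpow (Or.inl hα)]
    rw [Real.one_rpow, Real.zero_rpow (by linarith : α + 1 ≠ 0)]
    ring
  rw [hval] at main
  refine main.congr' ?_
  filter_upwards [self_mem_nhdsWithin] with t ht
  have ht0 : (0:ℝ) < t := ht
  have hht : 0 < h t := hpos t ht0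
  rw [integral_div, hsubst t ht0]
  field_simp
  simp only [mul_comm]

lemma integral_pos_of_pos (h : ℝ → ℝ) (t : ℝ) (ht : 0 < t)
    (hpos : ∀ x > (0:ℝ), 0 < h x) (hint : IntegrableOn h (Ioo 0 t)) :
    0 < ∫ x in Ioo 0 t, h x := by
  rw [setIntegral_pos_iff_support_of_nonneg_ae ?_ hint]
  · have hsub : Ioo 0 t ⊆ Function.support h ∩ Ioo 0 t := by
      intro x hx
      exact ⟨ne_of_gt (hpos x hx.1), hx⟩
    calc (0:ENNReal) < volume (Ioo 0 t) := by
          rw [Real.volume_Ioo]; simp [ENNReal.ofReal_pos]; linarith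
      _ ≤ volume (Function.support h ∩ Ioo 0 t) := measure_mono hsub
  · rw [EventuallyLE, ae_restrict_iff' measurableSet_Ioo]
    exact ae_of_all _ fun x hx => le_of_lt (hpos x hx.1)

/-- If `h₁, h₂` are regularly varying at `0` with the same index `α > −1` and
`h₃ = √(h₁h₂)`, then `d(H,t) = (m₁m₂ − m₃²)/(m₁m₂) → 0` as `t → 0`. -/
theorem stmt12 (h₁ h₂ : ℝ → ℝ) (α : ℝ) (hα : -1 < α)
    (hpos : ∀ t > (0:ℝ), 0 < h₁ t ∧ 0 < h₂ t)
    (hint : ∀ t > (0:ℝ), IntegrableOn h₁ (Ioo 0 t) ∧ IntegrableOn h₂ (Ioo 0 t) ∧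
      IntegrableOn (fun x => Real.sqrt (h₁ x * h₂ x)) (Ioo 0 t))
    (hrv₁ : ∀ t > (0:ℝ), Tendsto (fun s => h₁ (s * t) / h₁ s)
      (nhdsWithin 0 (Ioi 0)) (nhds (t ^ α)))
    (hrv₂ : ∀ t > (0:ℝ), Tendsto (fun s => h₂ (s * t) / h₂ s)
      (nhdsWithin 0 (Ioi 0)) (nhds (t ^ α))) :
    Tendsto (fun t =>
        ((∫ x in Ioo 0 t, h₁ x) * (∫ x in Ioo 0 t, h₂ x) -
          (∫ x in Ioo 0 t, Real.sqrt (h₁ x * h₂ x)) ^ 2) /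
        ((∫ x in Ioo 0 t, h₁ x) * (∫ x in Ioo 0 t, h₂ x)))
      (nhdsWithin 0 (Ioi 0)) (nhds 0) := by
  set h₃ : ℝ → ℝ := fun x => Real.sqrt (h₁ x * h₂ x) with h₃def
  have hpos₃ : ∀ t > (0:ℝ), 0 < h₃ t := fun t ht =>
    Real.sqrt_pos.2 (mul_pos (hpos t ht).1 (hpos t ht).2)
  have hrv₃ : ∀ t > (0:ℝ), Tendsto (fun s => h₃ (s * t) / h₃ s)
      (nhdsWithin 0 (Ioi 0)) (nhds (t ^ α)) := by
    intro t ht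
    have hmul : Tendsto (fun s => (h₁ (s * t) / h₁ s) * (h₂ (s * t) / h₂ s))
        (nhdsWithin 0 (Ioi 0)) (nhds (t ^ α * t ^ α)) := (hrv₁ t ht).mul (hrv₂ t ht)
    have hsq : Tendsto (fun s => Real.sqrt ((h₁ (s * t) / h₁ s) * (h₂ (s * t) / h₂ s)))
        (nhdsWithin 0 (Ioi 0)) (nhds (Real.sqrt (t ^ α * t ^ α))) :=
      (Real.continuous_sqrt.tendsto _).comp hmul
    rw [Real.sqrt_mul_self (Real.rpow_nonneg (le_of_lt ht) α)] at hsq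
    refine hsq.congr' ?_
    filter_upwards [self_mem_nhdsWithin] with s hs
    have hs0 : (0:ℝ) < s := hs
    have hst : 0 < s * t := mul_pos hs0 ht
    have p1 := (hpos s hs0).1
    have p2 := (hpos s hs0).2
    have p3 := (hpos (s*t) hst).1
    have p4 := (hpos (s*t) hst).2
    rw [h₃def]
    rw [div_mul_div_comm, Real.sqrt_div (le_of_lt (mul_pos p3 p4))]
  have k₁ := karamata h₁ α hα (fun t ht => (hpos t ht).1) (fun t ht => (hint t ht).1) hrv₁
  have k₂ := karamata h₂ α hα (fun t ht => (hpos t ht).2) (fun t ht => (hint t ht).2.1) hrv₂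
  have k₃ := karamata h₃ α hα hpos₃ (fun t ht => (hint t ht).2.2) hrv₃
  have hβ : (0:ℝ) < α + 1 := by linarith
  have hβne : (1:ℝ)/(α+1) ≠ 0 := by positivity
  have hlim : Tendsto (fun t =>
      1 - ((∫ x in Ioo 0 t, h₃ x) / (t * h₃ t)) ^ 2 /
        (((∫ x in Ioo 0 t, h₁ x) / (t * h₁ t)) * ((∫ x in Ioo 0 t, h₂ x) / (t * h₂ t))))
      (nhdsWithin (0:ℝ) (Ioi 0))
      (nhds (1 - (1/(α+1))^2 / ((1/(α+1)) * (1/(α+1))))) :=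
    tendsto_const_nhds.sub ((k₃.pow 2).div (k₁.mul k₂) (by positivity))
  have hval : 1 - ((1:ℝ)/(α+1))^2 / ((1/(α+1)) * (1/(α+1))) = 0 := by
    field_simp
    ring
  rw [hval] at hlim
  refine hlim.congr' ?_
  filter_upwards [self_mem_nhdsWithin] with t ht
  have ht0 : (0:ℝ) < t := ht
  set a := ∫ x in Ioo 0 t, h₁ x with hadef
  set b := ∫ x in Ioo 0 t, h₂ x with hbdef
  set c := ∫ x in Ioo 0 t, h₃ x with hcdef
  have ha0 : 0 < a := integral_pos_of_pos h₁ t ht0 (fun x hx => (hpos x hx).1) (hint t ht0).1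
  have hb0 : 0 < b := integral_pos_of_pos h₂ t ht0 (fun x hx => (hpos x hx).2) (hint t ht0).2.1
  have p1 := (hpos t ht0).1
  have p2 := (hpos t ht0).2
  have p3 := hpos₃ t ht0
  have hsq : h₃ t ^ 2 = h₁ t * h₂ t := Real.sq_sqrt (le_of_lt (mul_pos p1 p2))
  have key : (c / (t * h₃ t)) ^ 2 / ((a / (t * h₁ t)) * (b / (t * h₂ t)))
      = c ^ 2 / (a * b) := by
    rw [div_pow, mul_pow, hsq]
    field_simp
  rw [key]
  rw [sub_div, div_self (ne_of_gt (mul_pos ha0 hb0))]
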